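/- Let $H = H(n, r, q \mid \sigma)$ be a $\sigma$-hypergraph with $\sigma = (a_1 \ge \dots \ge a_s)$, $n \ge s$, $q \ge a_1$. Let $B \subseteq V(H)$ with $b_i = |B \cap V_i|$ and assume $b_1 \ge b_2 \ge \dots \ge b_n$. Then $\max_{E \in E(H)} |E \cap B| = \sum_{i=1}^{s} \min\{a_i, b_i\}$; that is, the edge maximizing intersection with $B$ places its part of size $a_i$ in class $V_i$ (sorted matching of the two nonincreasing sequences), and this value is achieved by some edge. -/

import Mathlib

open Finset

lemma card_filter_val_lt (m t : ℕ) :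
    ((Finset.univ : Finset (Fin m)).filter (fun i : Fin m => (i : ℕ) < t)).card = min t m := by
  rw [← Finset.card_range (min t m)]
  refine Finset.card_bij (fun i _ => (i : ℕ)) ?_ ?_ ?_
  · intro i hi
    simp only [Finset.mem_filter, Finset.mem_univ, true_and] at hi
    simp only [Finset.mem_range]
    have := i.isLt
    omega
  · intro i _ j _ h; exact Fin.val_injective h
  · intro k hk
    simp only [Finset.mem_range] at hk
    refine ⟨⟨k, ?_⟩, ?_, rfl⟩
    · omega
    · simp only [Finset.mem_filter, Finset.mem_univ, true_and]; omega

lemma prefix_iff {m : ℕ} (P : Fin m → Prop) [DecidablePred P]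
    (hP : ∀ i j : Fin m, i ≤ j → P j → P i) (i : Fin m) :
    P i ↔ (i : ℕ) < (Finset.univ.filter P).card := by
  constructor
  · intro h
    have hsub : (Finset.univ : Finset (Fin m)).filter (fun j : Fin m => (j : ℕ) < (i : ℕ) + 1)
        ⊆ Finset.univ.filter P := by
      intro j hj
      simp only [Finset.mem_filter, Finset.mem_univ, true_and] at hj ⊢
      exact hP j i (by rw [Fin.le_def]; omega) h
    have hc := Finset.card_le_card hsub
    rw [card_filter_val_lt] at hc
    have := i.isLt
    omega
  · intro h
    by_contra hP'
    have hsub : Finset.univ.filter P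
        ⊆ (Finset.univ : Finset (Fin m)).filter (fun j : Fin m => (j : ℕ) < (i : ℕ)) := by
      intro j hj
      simp only [Finset.mem_filter, Finset.mem_univ, true_and] at hj ⊢
      by_contra hji
      exact hP' (hP i j (by rw [Fin.le_def]; omega) hj)
    have hc := Finset.card_le_card hsub
    rw [card_filter_val_lt] at hc
    omega

lemma sum_min_eq {ι : Type*} (s : Finset ι) (N : ℕ) (x y : ι → ℕ) (hx : ∀ i ∈ s, x i ≤ N) :
    ∑ i ∈ s, min (x i) (y i)
      = ∑ k ∈ Finset.range N, (s.filter (fun i => k < x i ∧ k < y i)).card := by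
  have h1 : ∀ i ∈ s, min (x i) (y i)
      = ∑ k ∈ Finset.range N, (if k < x i ∧ k < y i then 1 else 0) := by
    intro i hi
    rw [← Finset.card_filter]
    have : (Finset.range N).filter (fun k => k < x i ∧ k < y i)
        = Finset.range (min (x i) (y i)) := by
      ext k
      simp only [Finset.mem_filter, Finset.mem_range, lt_min_iff]
      have := hx i hi
      omega
    rw [this, Finset.card_range]
  rw [Finset.sum_congr rfl h1, Finset.sum_comm]
  refine Finset.sum_congr rfl fun k _ => ?_
  rw [Finset.card_filter]

/-- `K` is an edge of the σ-hypergraph `H(n,r,q | σ)` (with σ given by `a : Fin s → ℕ`). -/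
def isEdge {n q s : ℕ} (a : Fin s → ℕ) (K : Finset (Fin n × Fin q)) : Prop :=
  Multiset.filter (fun x => x ≠ 0)
      (Multiset.map (fun i => (K.filter (fun v => v.1 = i)).card)
        (Finset.univ : Finset (Fin n)).val)
    = Multiset.map a (Finset.univ : Finset (Fin s)).val

lemma multiset_eq_of_support (n s : ℕ) (hn : s ≤ n) (a : Fin s → ℕ) (hpos : ∀ i, 1 ≤ a i)
    (c : Fin n → ℕ) (h1 : ∀ i : Fin s, c (Fin.castLE hn i) = a i)
    (h2 : ∀ m : Fin n, s ≤ (m : ℕ) → c m = 0) :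
    Multiset.filter (fun x => x ≠ 0) (Multiset.map c (Finset.univ : Finset (Fin n)).val)
      = Multiset.map a (Finset.univ : Finset (Fin s)).val := by
  ext v
  rw [Multiset.count_filter]
  by_cases hv : v = 0
  · subst hv
    simp only [ne_eq, not_true_eq_false, if_false]
    symm
    rw [Multiset.count_eq_zero]
    intro hmem
    obtain ⟨j, _, hj⟩ := Multiset.mem_map.1 hmem
    have := hpos j
    omega
  · simp only [ne_eq, hv, not_false_eq_true, if_true]
    rw [Multiset.count_map, Multiset.count_map]
    show ((Finset.univ : Finset (Fin n)).filter (fun m => v = c m)).card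
      = ((Finset.univ : Finset (Fin s)).filter (fun j => v = a j)).card
    symm
    refine Finset.card_bij (fun j _ => Fin.castLE hn j) ?_ ?_ ?_
    · intro j hj
      simp only [Finset.mem_filter, Finset.mem_univ, true_and] at hj ⊢
      rw [h1 j]; exact hj
    · intro i _ j _ h
      exact Fin.castLE_injective hn h
    · intro m hm
      simp only [Finset.mem_filter, Finset.mem_univ, true_and] at hm
      have hms : (m : ℕ) < s := by
        by_contra hms
        exact hv (by rw [hm, h2 m (by omega)])
      refine ⟨⟨(m : ℕ), hms⟩, ?_, ?_⟩
      · simp only [Finset.mem_filter, Finset.mem_univ, true_and]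
        rw [hm, ← h1 ⟨(m : ℕ), hms⟩]
        rfl
      · ext; simp [Fin.castLE]

theorem stmt_15 (n r q s : ℕ) (a : Fin s → ℕ)
    (hs : 1 ≤ s)
    (hpos : ∀ i, 1 ≤ a i)
    (hmono : ∀ i j : Fin s, i ≤ j → a j ≤ a i)
    (hsum : ∑ i, a i = r)
    (hn : s ≤ n) (hq : a ⟨0, hs⟩ ≤ q)
    (B : Finset (Fin n × Fin q))
    (b : Fin n → ℕ)
    (hb : ∀ i, b i = (B.filter (fun v => v.1 = i)).card)
    (hbmono : ∀ i j : Fin n, i ≤ j → b j ≤ b i) :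
    IsGreatest
      {m | ∃ E : Finset (Fin n × Fin q), isEdge a E ∧ (E ∩ B).card = m}
      (∑ i : Fin s, min (a i) (b (Fin.castLE hn i))) := by
  classical
  have hclass : ∀ (X : Finset (Fin n × Fin q)) (i : Fin n),
      (X.filter (fun v => v.1 = i)).card ≤ q := by
    intro X i
    have hsub : X.filter (fun v => v.1 = i) ⊆ ({i} : Finset (Fin n)) ×ˢ (Finset.univ : Finset (Fin q)) := by
      intro v hv
      simp only [Finset.mem_filter, Finset.mem_product, Finset.mem_singleton, Finset.mem_univ] at hv ⊢
      exact ⟨hv.2, trivial⟩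
    have := Finset.card_le_card hsub
    simpa using this
  have hbq : ∀ i : Fin n, b i ≤ q := fun i => (hb i) ▸ hclass B i
  have haq : ∀ i : Fin s, a i ≤ q :=
    fun i => le_trans (hmono ⟨0, hs⟩ i (by simp [Fin.le_def])) hq
  have har : ∀ j : Fin s, a j ≤ r := by
    intro j
    rw [← hsum]
    exact Finset.single_le_sum (fun i _ => Nat.zero_le _) (Finset.mem_univ j)
  constructor
  · -- membership
    have hex : ∀ i : Fin s, ∃ S : Finset (Fin n × Fin q),
        (∀ v ∈ S, v.1 = Fin.castLE hn i) ∧ S.card = a i ∧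
        (S ∩ B).card = min (a i) (b (Fin.castLE hn i)) := by
      intro i
      set I := Fin.castLE hn i with hI
      set Ci : Finset (Fin n × Fin q) := ({I} : Finset (Fin n)) ×ˢ (Finset.univ : Finset (Fin q)) with hCi
      set Bi := B.filter (fun v => v.1 = I) with hBi
      have hBiCi : Bi ⊆ Ci := by
        intro v hv
        simp only [hBi, hCi, Finset.mem_filter, Finset.mem_product, Finset.mem_singleton,
          Finset.mem_univ] at hv ⊢
        exact ⟨hv.2, trivial⟩
      have hBicard : Bi.card = b I := (hb I).symm
      have hCicard : Ci.card = q := by simp [hCi]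
      obtain ⟨T, hTsub, hTcard⟩ := Finset.exists_subset_card_eq
        (show min (a i) (b I) ≤ Bi.card by rw [hBicard]; exact min_le_right _ _)
      have hUcard : (T ∪ (Ci \ Bi)).card = min (a i) (b I) + (q - b I) := by
        rw [Finset.card_union_of_disjoint, hTcard, Finset.card_sdiff_of_subset hBiCi, hCicard, hBicard]
        exact Finset.disjoint_sdiff.mono_left hTsub
      have hUa : a i ≤ (T ∪ (Ci \ Bi)).card := by
        rw [hUcard]
        have h1 := hbq I
        have h2 := haq i
        omega
      obtain ⟨S, hTS, hSU, hScard⟩ := Finset.exists_subsuperset_card_eq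
        Finset.subset_union_left (by rw [hTcard]; exact min_le_left _ _) hUa
      have hSCi : S ⊆ Ci := by
        intro v hv
        rcases Finset.mem_union.1 (hSU hv) with h | h
        · exact hBiCi (hTsub h)
        · exact (Finset.mem_sdiff.1 h).1
      refine ⟨S, ?_, hScard, ?_⟩
      · intro v hv
        have := hSCi hv
        simp only [hCi, Finset.mem_product, Finset.mem_singleton] at this
        exact this.1
      · have hSB : S ∩ B = T := by
          apply Finset.Subset.antisymm
          · intro v hv
            obtain ⟨hvS, hvB⟩ := Finset.mem_inter.1 hv
            rcases Finset.mem_union.1 (hSU hvS) with h | h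
            · exact h
            · exfalso
              obtain ⟨hvCi, hvBi⟩ := Finset.mem_sdiff.1 h
              apply hvBi
              simp only [hBi, Finset.mem_filter]
              refine ⟨hvB, ?_⟩
              simp only [hCi, Finset.mem_product, Finset.mem_singleton] at hvCi
              exact hvCi.1
          · intro v hv
            exact Finset.mem_inter.2 ⟨hTS hv, (Finset.filter_subset _ _) (hTsub hv)⟩
        rw [hSB, hTcard]
    choose S hS1 hS2 hS3 using hex
    set E := Finset.univ.biUnion S with hEdef
    have hfilter : ∀ i : Fin s, E.filter (fun v => v.1 = Fin.castLE hn i) = S i := by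
      intro i
      ext v
      simp only [hEdef, Finset.mem_filter, Finset.mem_biUnion, Finset.mem_univ, true_and]
      constructor
      · rintro ⟨⟨j, hj⟩, hv1⟩
        have := hS1 j v hj
        have hij : j = i := Fin.castLE_injective hn (by rw [← this, hv1])
        rwa [← hij]
      · intro hv
        exact ⟨⟨i, hv⟩, hS1 i v hv⟩
    have hfilter0 : ∀ m : Fin n, s ≤ (m : ℕ) → E.filter (fun v => v.1 = m) = ∅ := by
      intro m hm
      ext v
      simp only [hEdef, Finset.mem_filter, Finset.mem_biUnion, Finset.mem_univ, true_and,
        Finset.notMem_empty, iff_false, not_and]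
      rintro ⟨j, hj⟩ hv1
      have := hS1 j v hj
      rw [this] at hv1
      have : (Fin.castLE hn j : ℕ) = (m : ℕ) := by rw [hv1]
      simp only [Fin.coe_castLE] at this
      have := j.isLt
      omega
    refine ⟨E, ?_, ?_⟩
    · exact multiset_eq_of_support n s hn a hpos _
        (fun i => by rw [hfilter i]; exact hS2 i)
        (fun m hm => by rw [hfilter0 m hm]; simp)
    · have hEB : E ∩ B = Finset.univ.biUnion (fun i => S i ∩ B) := by
        ext v
        simp only [hEdef, Finset.mem_inter, Finset.mem_biUnion, Finset.mem_univ, true_and]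
        tauto
      rw [hEB, Finset.card_biUnion]
      · exact Finset.sum_congr rfl fun i _ => hS3 i
      · intro i _ j _ hij
        rw [Function.onFun, Finset.disjoint_left]
        intro v hvi hvj
        apply hij
        apply Fin.castLE_injective hn
        rw [← hS1 i v (Finset.mem_inter.1 hvi).1, ← hS1 j v (Finset.mem_inter.1 hvj).1]
  · -- upper bound
    rintro m ⟨E, hEdge, rfl⟩
    set c : Fin n → ℕ := fun i => (E.filter (fun v => v.1 = i)).card with hc
    have hCA : ∀ k : ℕ, ((Finset.univ : Finset (Fin n)).filter (fun i => k < c i)).card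
        = ((Finset.univ : Finset (Fin s)).filter (fun j => k < a j)).card := by
      intro k
      have e1 : Multiset.filter (fun v => k < v)
            (Multiset.map c (Finset.univ : Finset (Fin n)).val)
          = Multiset.filter (fun v => k < v)
            (Multiset.map a (Finset.univ : Finset (Fin s)).val) := by
        rw [← hEdge, Multiset.filter_filter]
        apply Multiset.filter_congr
        intro v _
        constructor
        · intro h; omega
        · intro h; exact h.1
      have e2 := congrArg Multiset.card e1
      rw [← Multiset.countP_eq_card_filter, ← Multiset.countP_eq_card_filter,
        Multiset.countP_map, Multiset.countP_map] at e2
      rw [Finset.card_def, Finset.card_def, Finset.filter_val, Finset.filter_val]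
      exact e2
    have key : ∀ k : ℕ,
        ((Finset.univ : Finset (Fin n)).filter (fun i => k < c i ∧ k < b i)).card
        ≤ ((Finset.univ : Finset (Fin s)).filter
            (fun j => k < a j ∧ k < b (Fin.castLE hn j))).card := by
      intro k
      set A := ((Finset.univ : Finset (Fin s)).filter (fun j => k < a j)).card with hA
      set Bk := ((Finset.univ : Finset (Fin n)).filter (fun i => k < b i)).card with hBk
      have hAs : A ≤ s := le_trans (Finset.card_filter_le _ _) (by simp)
      have ha_iff : ∀ j : Fin s, k < a j ↔ (j : ℕ) < A :=
        prefix_iff _ (fun i j hij hj => lt_of_lt_of_le hj (hmono i j hij))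
      have hb_iff : ∀ i : Fin n, k < b i ↔ (i : ℕ) < Bk :=
        prefix_iff _ (fun i j hij hj => lt_of_lt_of_le hj (hbmono i j hij))
      have hRHS : ((Finset.univ : Finset (Fin s)).filter
          (fun j => k < a j ∧ k < b (Fin.castLE hn j))).card = min A Bk := by
        have heq : (Finset.univ : Finset (Fin s)).filter
            (fun j => k < a j ∧ k < b (Fin.castLE hn j))
            = (Finset.univ : Finset (Fin s)).filter (fun j : Fin s => (j : ℕ) < min A Bk) := by
          ext j
          simp only [Finset.mem_filter, Finset.mem_univ, true_and]
          rw [ha_iff j, hb_iff (Fin.castLE hn j)]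
          simp only [Fin.coe_castLE]
          omega
        rw [heq, card_filter_val_lt]
        omega
      rw [hRHS]
      apply le_min
      · rw [hA, ← hCA k]
        apply Finset.card_le_card
        intro i hi
        simp only [Finset.mem_filter, Finset.mem_univ, true_and] at hi ⊢
        exact hi.1
      · rw [hBk]
        apply Finset.card_le_card
        intro i hi
        simp only [Finset.mem_filter, Finset.mem_univ, true_and] at hi ⊢
        exact hi.2
    set N := q + r with hN
    have hsplit : (E ∩ B).card
        = ∑ i : Fin n, ((E ∩ B).filter (fun v => v.1 = i)).card :=
      Finset.card_eq_sum_card_fiberwise (fun v _ => Finset.mem_univ v.1)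
    have hle1 : ∀ i : Fin n, ((E ∩ B).filter (fun v => v.1 = i)).card ≤ min (c i) (b i) := by
      intro i
      apply le_min
      · apply Finset.card_le_card
        intro v hv
        simp only [Finset.mem_filter, Finset.mem_inter] at hv ⊢
        exact ⟨hv.1.1, hv.2⟩
      · rw [hb i]
        apply Finset.card_le_card
        intro v hv
        simp only [Finset.mem_filter, Finset.mem_inter] at hv ⊢
        exact ⟨hv.1.2, hv.2⟩
    calc (E ∩ B).card = ∑ i : Fin n, ((E ∩ B).filter (fun v => v.1 = i)).card := hsplit
      _ ≤ ∑ i : Fin n, min (c i) (b i) := Finset.sum_le_sum fun i _ => hle1 i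
      _ = ∑ k ∈ Finset.range N,
            ((Finset.univ : Finset (Fin n)).filter (fun i => k < c i ∧ k < b i)).card :=
          sum_min_eq _ N c b (fun i _ =>
            le_trans (hclass E i) (Nat.le_add_right q r))
      _ ≤ ∑ k ∈ Finset.range N,
            ((Finset.univ : Finset (Fin s)).filter
              (fun j => k < a j ∧ k < b (Fin.castLE hn j))).card :=
          Finset.sum_le_sum fun k _ => key k
      _ = ∑ i : Fin s, min (a i) (b (Fin.castLE hn i)) :=
          (sum_min_eq _ N a (fun j => b (Fin.castLE hn j)) (fun j _ =>
            le_trans (har j) (Nat.le_add_left r q))).symm
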